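/- Let L, c > 0 and 0 < ξ < c. For N ≥ 1 set h = L/(N+1), let A_h be the (N+1)×(N+1) matrix equal to (c²/h²) times the tridiagonal matrix with diagonal entries 2 except the last diagonal entry 1 and off-diagonal entries −1, let M be the (N+1)×(N+1) tridiagonal matrix with diagonal entries 2/3 except the last entry 1/3 and off-diagonal entries 1/6, and let 𝒜_h^{FEM}(ξ) be the 2(N+1)×2(N+1) block matrix [[0, I], [−M⁻¹A_h, −(ξ/h)·M⁻¹E]], where E is the matrix whose only nonzero entry is E_{N+1,N+1} = 1. Then there exist C > 0 and N₀ ∈ ℕ such that for all N ≥ N₀ and every eigenvalue λ of 𝒜_h^{FEM}(ξ), there exists an integer j ∈ {0, 1, …, 4N+4} with h²|λ|² ≤ 12c²·sin²( 2jπ/(4N+5) ) + C·h; in particular h²|λ|² ≤ 12c² + C·h. -/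

import Mathlib

open Matrix

/-- The matrix (c²/h²) × tridiag(−1, 2, −1) of size n, with last diagonal entry 1
instead of 2. -/
noncomputable def stiff (c h : ℝ) (n : ℕ) : Matrix (Fin n) (Fin n) ℝ :=
  Matrix.of fun i j =>
    (c^2/h^2) * (if i = j then (if (i:ℕ) = n - 1 then 1 else 2)
      else if (i:ℕ)+1 = (j:ℕ) ∨ (j:ℕ)+1 = (i:ℕ) then -1 else 0)

/-- The tridiagonal mass matrix of size n: diagonal 2/3 except last entry 1/3,
off-diagonal entries 1/6. -/
noncomputable def massFEM (n : ℕ) : Matrix (Fin n) (Fin n) ℝ :=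
  Matrix.of fun i j =>
    if i = j then (if (i:ℕ) = n - 1 then 1/3 else 2/3)
    else if (i:ℕ)+1 = (j:ℕ) ∨ (j:ℕ)+1 = (i:ℕ) then 1/6 else 0

/-- The (N+1)×(N+1) matrix whose only nonzero entry is E_{N+1,N+1} = 1. -/
def cornerE (N : ℕ) : Matrix (Fin (N+1)) (Fin (N+1)) ℝ :=
  Matrix.of fun i j => if (i:ℕ) = N ∧ (j:ℕ) = N then 1 else 0

/-- The 2(N+1)×2(N+1) finite-element first-order system matrix
𝒜_h^{FEM}(ξ) = [[0, I], [−M⁻¹A_h, −(ξ/h)·M⁻¹E]]. -/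
noncomputable def sysFEM (c h ξ : ℝ) (N : ℕ) :
    Matrix (Fin (N+1) ⊕ Fin (N+1)) (Fin (N+1) ⊕ Fin (N+1)) ℝ :=
  Matrix.fromBlocks 0 1 (-((massFEM (N+1))⁻¹ * stiff c h (N+1)))
    (-(ξ/h) • ((massFEM (N+1))⁻¹ * cornerE N))

open Complex

namespace SysFEMAux

noncomputable def Sq {N : ℕ} (u : Fin (N+1) → ℂ) : ℝ := ∑ i, Complex.normSq (u i)
noncomputable def Pr {N : ℕ} (u : Fin (N+1) → ℂ) : ℝ :=
  ∑ i : Fin N, 2 * ((starRingEnd ℂ) (u i.castSucc) * u i.succ).re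
noncomputable def pC {N : ℕ} (u : Fin (N+1) → ℂ) : ℂ :=
  ∑ i : Fin N, (starRingEnd ℂ) (u i.castSucc) * u i.succ

noncomputable def triM (N : ℕ) (dd dl o : ℝ) : Matrix (Fin (N+1)) (Fin (N+1)) ℝ :=
  Matrix.of fun i j =>
    if i = j then (if (i:ℕ) = N then dl else dd)
    else if (i:ℕ)+1 = (j:ℕ) ∨ (j:ℕ)+1 = (i:ℕ) then o else 0

lemma pairSum {N : ℕ} (f g : Fin (N+1) → ℂ) :
    (∑ i : Fin (N+1), ∑ j : Fin (N+1), if (i:ℕ)+1 = (j:ℕ) then f i * g j else 0)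
    = ∑ k : Fin N, f k.castSucc * g k.succ := by
  have inner : ∀ i : Fin (N+1),
      (∑ j : Fin (N+1), if (i:ℕ)+1 = (j:ℕ) then f i * g j else 0)
      = if h : (i:ℕ) < N then f i * g ⟨(i:ℕ)+1, by omega⟩ else 0 := by
    intro i
    by_cases h : (i:ℕ) < N
    · rw [dif_pos h, Finset.sum_eq_single (⟨(i:ℕ)+1, by omega⟩ : Fin (N+1))]
      · simp
      · intro j _ hj
        rw [if_neg]
        intro hc
        exact hj (Fin.ext hc.symm)
      · intro h'; exact absurd (Finset.mem_univ _) h'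
    · rw [dif_neg h]
      apply Finset.sum_eq_zero
      intro j _
      rw [if_neg]
      have := j.isLt
      have := i.isLt
      omega
  rw [Finset.sum_congr rfl fun i _ => inner i, Fin.sum_univ_castSucc]
  simp only [Fin.val_last, Fin.coe_castSucc]
  rw [dif_neg (lt_irrefl N), add_zero]
  refine Finset.sum_congr rfl fun k _ => ?_
  rw [dif_pos k.isLt]
  rfl

lemma hPr {N : ℕ} (u : Fin (N+1) → ℂ) : Pr u = 2 * (pC u).re := by
  simp [Pr, pC, Complex.re_sum, Finset.mul_sum]

lemma quadform (N : ℕ) (dd dl o : ℝ) (u : Fin (N+1) → ℂ) :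
    star u ⬝ᵥ ((triM N dd dl o).map (fun x => (x:ℂ))) *ᵥ u
    = ((dd * (Sq u - Complex.normSq (u (Fin.last N))) + dl * Complex.normSq (u (Fin.last N))
        + o * Pr u : ℝ) : ℂ) := by
  classical
  have hsplit : ∀ i j : Fin (N+1),
      ((triM N dd dl o i j : ℝ) : ℂ)
      = (if i = j then (if (i:ℕ) = N then (dl:ℂ) else (dd:ℂ)) else 0)
        + (if (i:ℕ)+1 = (j:ℕ) then (o:ℂ) else 0)
        + (if (j:ℕ)+1 = (i:ℕ) then (o:ℂ) else 0) := by
    intro i j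
    simp only [triM, Matrix.of_apply, Fin.ext_iff]
    split_ifs <;> push_cast <;> first | ring1 | (exfalso; omega)
  have step1 : star u ⬝ᵥ ((triM N dd dl o).map (fun x => (x:ℂ))) *ᵥ u
      = ∑ i, ∑ j, (starRingEnd ℂ) (u i) * (((triM N dd dl o i j : ℝ) : ℂ) * u j) := by
    simp [dotProduct, Matrix.mulVec, Matrix.map_apply, Finset.mul_sum,
      RCLike.star_def]
  rw [step1]
  have step2 : ∀ i j : Fin (N+1), (starRingEnd ℂ) (u i) * (((triM N dd dl o i j : ℝ) : ℂ) * u j)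
      = (if i = j then (starRingEnd ℂ) (u i) * ((if (i:ℕ) = N then (dl:ℂ) else (dd:ℂ)) * u j) else 0)
        + (if (i:ℕ)+1 = (j:ℕ) then (starRingEnd ℂ) (u i) * ((o:ℂ) * u j) else 0)
        + (if (j:ℕ)+1 = (i:ℕ) then ((o:ℂ) * u j) * (starRingEnd ℂ) (u i) else 0) := by
    intro i j
    rw [hsplit i j]
    split_ifs <;> ring1
  simp only [step2, Finset.sum_add_distrib]
  have T1 : (∑ i : Fin (N+1), ∑ j : Fin (N+1),
      (if i = j then (starRingEnd ℂ) (u i) * ((if (i:ℕ) = N then (dl:ℂ) else (dd:ℂ)) * u j) else 0))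
      = ((dd * (Sq u - Complex.normSq (u (Fin.last N)))
          + dl * Complex.normSq (u (Fin.last N)) : ℝ) : ℂ) := by
    have h1 : ∀ i : Fin (N+1), (∑ j : Fin (N+1),
        (if i = j then (starRingEnd ℂ) (u i) * ((if (i:ℕ) = N then (dl:ℂ) else (dd:ℂ)) * u j) else 0))
        = (if (i:ℕ) = N then (dl:ℂ) else (dd:ℂ)) * ((normSq (u i) : ℝ) : ℂ) := by
      intro i
      rw [Finset.sum_ite_eq]
      simp only [Finset.mem_univ, if_true]
      have hc : (starRingEnd ℂ) (u i) * u i = ((normSq (u i) : ℝ) : ℂ) := by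
        rw [mul_comm, Complex.mul_conj]
      calc (starRingEnd ℂ) (u i) * ((if (i:ℕ) = N then (dl:ℂ) else (dd:ℂ)) * u i)
          = (if (i:ℕ) = N then (dl:ℂ) else (dd:ℂ)) * ((starRingEnd ℂ) (u i) * u i) := by ring
        _ = _ := by rw [hc]
    rw [Finset.sum_congr rfl fun i _ => h1 i]
    have hre : ∀ i : Fin (N+1), ((if (i:ℕ) = N then (dl:ℂ) else (dd:ℂ))) * ((normSq (u i):ℝ):ℂ)
        = ((dd:ℂ)) * ((normSq (u i):ℝ):ℂ)
          + (if i = Fin.last N then ((dl:ℂ) - (dd:ℂ)) * ((normSq (u i):ℝ):ℂ) else 0) := by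
      intro i
      have hiff : ((i:ℕ) = N) = (i = Fin.last N) := by
        simp [Fin.ext_iff, Fin.val_last]
      simp only [hiff]
      split_ifs <;> ring
    rw [Finset.sum_congr rfl fun i _ => hre i, Finset.sum_add_distrib,
      Finset.sum_ite_eq' Finset.univ (Fin.last N)]
    simp only [Finset.mem_univ, if_true, ← Finset.mul_sum]
    have hS : (∑ i, ((normSq (u i) : ℝ) : ℂ)) = ((Sq u : ℝ) : ℂ) := by
      rw [Sq]; push_cast; rfl
    rw [hS]
    push_cast
    ring
  have T2 : (∑ i : Fin (N+1), ∑ j : Fin (N+1),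
      (if (i:ℕ)+1 = (j:ℕ) then (starRingEnd ℂ) (u i) * ((o:ℂ) * u j) else 0))
      = (o:ℂ) * pC u := by
    rw [pairSum (fun i => (starRingEnd ℂ) (u i)) (fun j => (o:ℂ) * u j), pC, Finset.mul_sum]
    exact Finset.sum_congr rfl fun k _ => by ring
  have T3 : (∑ i : Fin (N+1), ∑ j : Fin (N+1),
      (if (j:ℕ)+1 = (i:ℕ) then ((o:ℂ) * u j) * (starRingEnd ℂ) (u i) else 0))
      = (o:ℂ) * (starRingEnd ℂ) (pC u) := by
    rw [Finset.sum_comm, pairSum (fun j => (o:ℂ) * u j) (fun i => (starRingEnd ℂ) (u i))]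
    rw [pC, map_sum, Finset.mul_sum]
    refine Finset.sum_congr rfl fun k _ => ?_
    rw [_root_.map_mul, Complex.conj_conj]
    ring
  rw [T1, T2, T3, hPr u, add_assoc]
  have h2 : ((o:ℂ)) * pC u + ((o:ℂ)) * (starRingEnd ℂ) (pC u) = ((o * (2*(pC u).re) : ℝ) : ℂ) := by
    rw [← mul_add, Complex.add_conj]
    push_cast
    ring
  rw [h2]
  push_cast
  ring

lemma sos {N : ℕ} (u : Fin (N+1) → ℂ) (β γ : ℝ) :
    0 ≤ β^2 * (Sq u - Complex.normSq (u (Fin.last N))) + γ^2 * (Sq u - Complex.normSq (u 0))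
      + (β*γ) * Pr u := by
  have e1 : (∑ k : Fin N, Complex.normSq (u k.castSucc))
      = Sq u - Complex.normSq (u (Fin.last N)) := by
    rw [Sq, Fin.sum_univ_castSucc]; ring
  have e2 : (∑ k : Fin N, Complex.normSq (u k.succ)) = Sq u - Complex.normSq (u 0) := by
    rw [Sq, Fin.sum_univ_succ]; ring
  have key : ∀ k : Fin N, Complex.normSq ((β:ℂ) * u k.castSucc + (γ:ℂ) * u k.succ)
      = β^2 * Complex.normSq (u k.castSucc) + γ^2 * Complex.normSq (u k.succ)
        + (β*γ) * (2 * ((starRingEnd ℂ) (u k.castSucc) * u k.succ).re) := by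
    intro k
    simp only [Complex.normSq_apply, Complex.add_re, Complex.add_im, Complex.mul_re,
      Complex.mul_im, Complex.conj_re, Complex.conj_im, Complex.ofReal_re, Complex.ofReal_im]
    ring
  have h0 : 0 ≤ ∑ k : Fin N, Complex.normSq ((β:ℂ) * u k.castSucc + (γ:ℂ) * u k.succ) :=
    Finset.sum_nonneg fun k _ => Complex.normSq_nonneg _
  calc (0:ℝ) ≤ ∑ k : Fin N, Complex.normSq ((β:ℂ) * u k.castSucc + (γ:ℂ) * u k.succ) := h0
    _ = _ := by
      rw [Finset.sum_congr rfl fun k _ => key k, Finset.sum_add_distrib, Finset.sum_add_distrib,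
        ← Finset.mul_sum, ← Finset.mul_sum, ← Finset.mul_sum, e1, e2]
      rfl

lemma Sq_pos {N : ℕ} {u : Fin (N+1) → ℂ} (hu : u ≠ 0) : 0 < Sq u := by
  obtain ⟨i, hi⟩ := Function.ne_iff.mp hu
  have h1 : 0 < Complex.normSq (u i) := Complex.normSq_pos.mpr hi
  exact lt_of_lt_of_le h1
    (Finset.single_le_sum (fun j _ => Complex.normSq_nonneg _) (Finset.mem_univ i))

lemma nsq_le_Sq {N : ℕ} (u : Fin (N+1) → ℂ) (i : Fin (N+1)) : Complex.normSq (u i) ≤ Sq u :=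
  Finset.single_le_sum (fun j _ => Complex.normSq_nonneg _) (Finset.mem_univ i)

lemma quad_real (N : ℕ) (dd dl o : ℝ) (x : Fin (N+1) → ℝ) :
    ((x ⬝ᵥ (triM N dd dl o) *ᵥ x : ℝ) : ℂ)
      = star (fun i => (x i : ℂ)) ⬝ᵥ ((triM N dd dl o).map (fun r => (r:ℂ)))
          *ᵥ (fun i => (x i : ℂ)) := by
  simp only [dotProduct, Matrix.mulVec, Matrix.map_apply, Pi.star_apply,
    RCLike.star_def, Complex.conj_ofReal]
  push_cast
  rfl

lemma mass_eq (N : ℕ) : massFEM (N+1) = triM N (2/3) (1/3) (1/6) := by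
  ext i j
  simp [massFEM, triM]

lemma stiff_eq (N : ℕ) (c h : ℝ) :
    stiff c h (N+1) = triM N (2*c^2/h^2) (c^2/h^2) (-(c^2/h^2)) := by
  ext i j
  simp only [stiff, triM, Matrix.of_apply, Nat.add_sub_cancel]
  split_ifs <;> ring

lemma corner_eq (N : ℕ) : cornerE N = triM N 0 1 0 := by
  ext i j
  simp only [cornerE, triM, Matrix.of_apply, Fin.ext_iff]
  split_ifs <;> first | rfl | (exfalso; omega)

lemma mass_posdef (N : ℕ) : (massFEM (N+1)).PosDef := by
  rw [Matrix.posDef_iff_dotProduct_mulVec]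
  constructor
  · show (massFEM (N+1))ᴴ = massFEM (N+1)
    ext i j
    simp only [Matrix.conjTranspose_apply, star_trivial, massFEM, Matrix.of_apply, Fin.ext_iff]
    split_ifs <;> first | rfl | (exfalso; omega)
  · intro x hx
    have hu : (fun i => (x i : ℂ)) ≠ 0 := by
      intro h0
      apply hx
      funext i
      have := congrFun h0 i
      simpa using this
    have hq := quad_real N (2/3) (1/3) (1/6) x
    rw [← mass_eq] at hq
    rw [mass_eq N] at hq
    rw [quadform] at hq
    set u : Fin (N+1) → ℂ := fun i => (x i : ℂ) with hudef
    have hval : x ⬝ᵥ (massFEM (N+1)) *ᵥ x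
        = 2/3 * (Sq u - Complex.normSq (u (Fin.last N)))
          + 1/3 * Complex.normSq (u (Fin.last N)) + 1/6 * Pr u := by
      have := hq
      rw [mass_eq N]
      exact_mod_cast this
    have hS := Sq_pos hu
    have ht := nsq_le_Sq u (Fin.last N)
    have hz : 0 ≤ Complex.normSq (u 0) := Complex.normSq_nonneg _
    have hsos := sos u 1 1
    simp only [star_trivial]
    rw [hval]
    nlinarith [hsos, hS, ht, hz]

lemma mass_isUnit (N : ℕ) : IsUnit (massFEM (N+1)).det :=
  isUnit_iff_ne_zero.mpr (ne_of_gt (mass_posdef N).det_pos)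

end SysFEMAux

set_option maxHeartbeats 2000000
open SysFEMAux

/-- uniform eigenvalue estimates for 𝒜_h^{FEM}(ξ), h = L/(N+1):
there exist C > 0 and N₀ such that for all N ≥ N₀ and every eigenvalue λ,
for some j ∈ {0,…,4N+4}, h²|λ|² ≤ 12c²sin²(2jπ/(4N+5)) + Ch ≤ 12c² + Ch. -/
theorem sysFEM_eigenvalue_estimates (L c ξ : ℝ) (hL : 0 < L) (hc : 0 < c)
    (hξ0 : 0 < ξ) (hξc : ξ < c) :
    ∃ C > (0:ℝ), ∃ N₀ : ℕ, ∀ N : ℕ, N₀ ≤ N →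
      ∀ lam : ℂ, (∃ w : (Fin (N+1) ⊕ Fin (N+1)) → ℂ, w ≠ 0 ∧
          ((sysFEM c (L/((N:ℝ)+1)) ξ N).map (fun x => (x:ℂ))).mulVec w = lam • w) →
        ∃ j : ℕ, j ≤ 4*N+4 ∧
          (L/((N:ℝ)+1))^2 * ‖lam‖^2 ≤
            12*c^2*(Real.sin (2*(j:ℝ)*Real.pi/(4*(N:ℝ)+5)))^2 + C*(L/((N:ℝ)+1)) ∧
          (L/((N:ℝ)+1))^2 * ‖lam‖^2 ≤ 12*c^2 + C*(L/((N:ℝ)+1)) := by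
  have hπ := Real.pi_pos
  have hsq3 : Real.sqrt 3 ^ 2 = 3 := Real.sq_sqrt (by norm_num)
  have hs3nn : (0:ℝ) ≤ Real.sqrt 3 := Real.sqrt_nonneg 3
  have hs3le : Real.sqrt 3 ≤ 2 := by nlinarith
  have hs3ge : (1:ℝ) ≤ Real.sqrt 3 := by nlinarith
  refine ⟨12*c^2*Real.pi^2/(64*L) + 1, by positivity, 0, ?_⟩
  intro N _ lam hex
  obtain ⟨w, hw0, hw⟩ := hex
  set h : ℝ := L/((N:ℝ)+1) with hhdef
  have hNpos : (0:ℝ) < (N:ℝ)+1 := by positivity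
  have hh0 : 0 < h := by positivity
  have hhL : h ≤ L := by
    rw [hhdef, div_le_iff₀ hNpos]
    nlinarith [Nat.cast_nonneg (α := ℝ) N]
  -- the core bound
  have core : h^2 * ‖lam‖^2 ≤ 12*c^2 := by
    set u : Fin (N+1) → ℂ := w ∘ Sum.inl with hudef
    set v : Fin (N+1) → ℂ := w ∘ Sum.inr with hvdef
    rw [sysFEM, Matrix.fromBlocks_map, Matrix.fromBlocks_mulVec] at hw
    obtain ⟨h1, h2⟩ : ((0 : Matrix (Fin (N+1)) (Fin (N+1)) ℝ).map (fun x => (x:ℂ)) *ᵥ u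
          + (1 : Matrix (Fin (N+1)) (Fin (N+1)) ℝ).map (fun x => (x:ℂ)) *ᵥ v = lam • u)
        ∧ ((-((massFEM (N+1))⁻¹ * stiff c h (N+1))).map (fun x => (x:ℂ)) *ᵥ u
          + ((-(ξ/h) • ((massFEM (N+1))⁻¹ * cornerE N)).map (fun x => (x:ℂ))) *ᵥ v
            = lam • v) := by
      constructor
      · funext i
        exact congrFun hw (Sum.inl i)
      · funext i
        exact congrFun hw (Sum.inr i)
    have hv : v = lam • u := by
      rw [Matrix.map_zero _ (by push_cast; rfl), Matrix.map_one _ (by push_cast; rfl)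
        (by push_cast; rfl), Matrix.zero_mulVec, Matrix.one_mulVec, zero_add] at h1
      exact h1
    have hu0 : u ≠ 0 := by
      intro hu
      apply hw0
      funext i
      cases i with
      | inl i => exact congrFun hu i
      | inr i =>
        have : v i = 0 := by rw [hv, hu]; simp
        exact this
    -- multiply bottom row by the mass matrix
    have hMC0 : massFEM (N+1) * (-((massFEM (N+1))⁻¹ * stiff c h (N+1)))
        = -(stiff c h (N+1)) := by
      rw [Matrix.mul_neg, Matrix.mul_nonsing_inv_cancel_left _ _ (mass_isUnit N)]
    have hMD0 : massFEM (N+1) * (-(ξ/h) • ((massFEM (N+1))⁻¹ * cornerE N))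
        = -(ξ/h) • cornerE N := by
      rw [Matrix.mul_smul, Matrix.mul_nonsing_inv_cancel_left _ _ (mass_isUnit N)]
    have hfr : (fun x : ℝ => (x:ℂ)) = ⇑Complex.ofRealHom := rfl
    have hmapneg : ∀ (X : Matrix (Fin (N+1)) (Fin (N+1)) ℝ),
        (-X).map (fun x : ℝ => (x:ℂ)) = -(X.map (fun x : ℝ => (x:ℂ))) := by
      intro X; ext i j; simp [Matrix.map_apply]
    have hmapsmul : ∀ (r : ℝ) (X : Matrix (Fin (N+1)) (Fin (N+1)) ℝ),
        (r • X).map (fun x : ℝ => (x:ℂ)) = (r:ℂ) • (X.map (fun x : ℝ => (x:ℂ))) := by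
      intro r X; ext i j; simp [Matrix.map_apply]
    have hMu := congrArg (fun y => (massFEM (N+1)).map (fun x : ℝ => (x:ℂ)) *ᵥ y) h2
    simp only [Matrix.mulVec_add, Matrix.mulVec_mulVec, Matrix.mulVec_smul] at hMu
    rw [hfr, ← Matrix.map_mul, ← Matrix.map_mul, hMC0, hMD0, ← hfr, hmapneg, hmapsmul,
      Matrix.neg_mulVec, Matrix.smul_mulVec] at hMu
    rw [hv, Matrix.mulVec_smul, Matrix.mulVec_smul] at hMu
    -- take the quadratic form with star u
    have hq := congrArg (fun y => star u ⬝ᵥ y) hMu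
    simp only [dotProduct_add, dotProduct_neg, dotProduct_smul,
      smul_eq_mul] at hq
    -- rewrite quadratic forms
    rw [stiff_eq N c h, corner_eq N, mass_eq N, quadform, quadform, quadform] at hq
    set S := Sq u with hSdef
    set t := Complex.normSq (u (Fin.last N)) with htdef
    set z := Complex.normSq (u 0) with hzdef
    set P := Pr u with hPdef
    set x := lam.re with hxdef
    set y := lam.im with hydef
    have hre := congrArg Complex.re hq
    have him := congrArg Complex.im hq
    simp only [Complex.add_re, Complex.add_im, Complex.neg_re, Complex.neg_im,
      Complex.mul_re, Complex.mul_im, Complex.ofReal_re, Complex.ofReal_im,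
      mul_zero, zero_mul, sub_zero, zero_sub, add_zero, zero_add, neg_neg, neg_zero] at hre him
    have hre' : (2/3*(S-t) + 1/3*t + 1/6*P)*(x*x - y*y) + ξ/h*t*x
        + c^2/h^2*(2*S - t - P) = 0 := by
      first
      | linear_combination hre
      | linear_combination -hre
    have him' : y * (2*(2/3*(S-t) + 1/3*t + 1/6*P)*x + ξ/h*t) = 0 := by
      first
      | linear_combination him
      | linear_combination -him
    -- real facts
    have hS : 0 < S := Sq_pos hu0
    have ht : t ≤ S := nsq_le_Sq u _
    have htn : 0 ≤ t := Complex.normSq_nonneg _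
    have hzS : z ≤ S := nsq_le_Sq u _
    have hzn : 0 ≤ z := Complex.normSq_nonneg _
    have sos1 : 0 ≤ (S-t) + (S-z) + P := by linarith only [sos u 1 1]
    have sos2 : 0 ≤ (S-t) + (S-z) - P := by linarith only [sos u 1 (-1)]
    have sos3 : 0 ≤ (2+Real.sqrt 3)*(S-t) + (2-Real.sqrt 3)*(S-z) + P := by
      have hb2 : Real.sqrt (2+Real.sqrt 3) ^ 2 = 2+Real.sqrt 3 := Real.sq_sqrt (by linarith)
      have hg2 : Real.sqrt (2-Real.sqrt 3) ^ 2 = 2-Real.sqrt 3 := Real.sq_sqrt (by linarith)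
      have hbg : Real.sqrt (2+Real.sqrt 3) * Real.sqrt (2-Real.sqrt 3) = 1 := by
        rw [← Real.sqrt_mul (by linarith)]
        have h41 : (2+Real.sqrt 3) * (2-Real.sqrt 3) = 1 := by
          linear_combination -hsq3
        rw [h41, Real.sqrt_one]
      have hh := sos u (Real.sqrt (2+Real.sqrt 3)) (Real.sqrt (2-Real.sqrt 3))
      rw [hb2, hg2, hbg, one_mul] at hh
      exact hh
    set mm : ℝ := 2/3*(S-t) + 1/3*t + 1/6*P with hmmdef
    have hm : 0 < mm := by rw [hmmdef]; linarith only [sos1, hS, ht, hzn]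
    have hk0 : 0 ≤ 2*S - t - P := by linarith only [sos2, hzn]
    have hch : (0:ℝ) < c^2/h^2 := by positivity
    have hk : 0 ≤ c^2/h^2*(2*S - t - P) := mul_nonneg hch.le hk0
    have hkle : c^2/h^2*(2*S - t - P) ≤ 12*(c^2/h^2)*mm := by
      have h12 : 2*S - t - P ≤ 12*mm := by rw [hmmdef]; linarith only [sos1, hzn]
      calc c^2/h^2*(2*S - t - P) ≤ c^2/h^2*(12*mm) :=
            mul_le_mul_of_nonneg_left h12 hch.le
        _ = 12*(c^2/h^2)*mm := by ring
    have h2z : (0:ℝ) ≤ (2 - Real.sqrt 3) * z := mul_nonneg (by linarith) hzn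
    have hst : Real.sqrt 3 * t ≤ 6*mm := by
      rw [hmmdef]; linarith only [sos3, h2z]
    have habs : ‖lam‖ ^ 2 = x^2 + y^2 := by
      rw [Complex.sq_norm, Complex.normSq_apply]; ring
    have hxy : x^2 + y^2 ≤ 12*(c^2/h^2) := by
      have hre2 : mm*(x*x - y*y) + ξ/h*t*x + c^2/h^2*(2*S - t - P) = 0 := by
        rw [hmmdef]; linear_combination hre'
      have him2 : y * (2*mm*x + ξ/h*t) = 0 := by
        rw [hmmdef]; linear_combination him'
      rcases eq_or_ne y 0 with hy | hy
      · -- real eigenvalue case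
        rw [hy] at hre2
        rcases eq_or_ne x 0 with hx | hx
        · rw [hy, hx]
          have h00 : (0:ℝ)^2+(0:ℝ)^2 = 0 := by norm_num
          rw [h00]
          positivity
        · have hax : 0 < |x| := abs_pos.mpr hx
          have hb0 : 0 ≤ ξ/h * t := mul_nonneg (by positivity) htn
          have h1 : mm * x^2 ≤ (ξ/h*t) * |x| := by
            nlinarith only [hre2, hk, hb0, le_abs_self x, neg_abs_le x]
          have hxle : Real.sqrt 3 * (mm * x^2) ≤ 6 * (ξ/h) * (mm * |x|) := by
            calc Real.sqrt 3 * (mm * x^2) ≤ Real.sqrt 3 * ((ξ/h*t) * |x|) :=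
                  mul_le_mul_of_nonneg_left h1 hs3nn
              _ = (ξ/h)*((Real.sqrt 3*t)*|x|) := by ring
              _ ≤ (ξ/h)*((6*mm)*|x|) := by
                  apply mul_le_mul_of_nonneg_left _ (by positivity)
                  exact mul_le_mul_of_nonneg_right hst (abs_nonneg x)
              _ = 6*(ξ/h)*(mm*|x|) := by ring
          have h2 : Real.sqrt 3 * |x| ≤ 6*(ξ/h) := by
            have hmx : 0 < mm * |x| := mul_pos hm hax
            apply le_of_mul_le_mul_left _ hmx
            calc (mm*|x|) * (Real.sqrt 3 * |x|) = Real.sqrt 3 * (mm * x^2) := by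
                  rw [← _root_.sq_abs x]; ring
              _ ≤ 6*(ξ/h)*(mm*|x|) := hxle
              _ = (mm*|x|)*(6*(ξ/h)) := by ring
          have h3 : (Real.sqrt 3 * |x|) * (Real.sqrt 3 * |x|) ≤ (6*(ξ/h)) * (6*(ξ/h)) :=
            mul_self_le_mul_self (by positivity) h2
          have h3' : (Real.sqrt 3 * |x|) * (Real.sqrt 3 * |x|) = 3*x^2 := by
            rw [← _root_.sq_abs x]; linear_combination (|x|^2) * hsq3
          have h4 : x^2 ≤ 12 * (ξ/h)^2 := by
            rw [h3'] at h3; nlinarith only [h3]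
          have hxc : ξ^2 ≤ c^2 := by nlinarith only [hξ0, hξc]
          have h5 : (ξ/h)^2 ≤ c^2/h^2 := by
            rw [div_pow]
            exact (div_le_div_iff_of_pos_right (by positivity)).mpr hxc
          rw [hy]
          have h02 : (0:ℝ)^2 = 0 := by norm_num
          rw [h02]
          linarith only [h4, h5]
      · -- complex eigenvalue case
        have h2mx : 2*mm*x + ξ/h*t = 0 := (mul_eq_zero.mp him2).resolve_left hy
        have hmk : mm*(x^2+y^2) = c^2/h^2*(2*S - t - P) := by
          linear_combination (-1 : ℝ) * hre2 + x * h2mx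
        have h6 : mm * (x^2+y^2) ≤ mm*(12*(c^2/h^2)) := by
          rw [hmk]; linarith only [hkle]
        exact le_of_mul_le_mul_left h6 hm
    calc h^2 * ‖lam‖ ^2 = h^2 * (x^2+y^2) := by rw [habs]
      _ ≤ h^2 * (12*(c^2/h^2)) := mul_le_mul_of_nonneg_left hxy (sq_nonneg h)
      _ = 12*c^2 := by field_simp
  -- trigonometric comparison
  have hNc : (0:ℝ) ≤ (N:ℝ) := Nat.cast_nonneg N
  set δ : ℝ := Real.pi/(2*(4*(N:ℝ)+5)) with hδdef
  have hδ0 : 0 ≤ δ := by positivity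
  have hδπ : δ ≤ Real.pi := by
    rw [hδdef]
    exact div_le_self hπ.le (by nlinarith only [hNc])
  have hD : 4*(N:ℝ)+5 ≠ 0 := by positivity
  have hangle : 2*(((N+1:ℕ)):ℝ)*Real.pi/(4*(N:ℝ)+5) = Real.pi/2 - δ := by
    push_cast
    rw [hδdef]
    field_simp
    ring
  have hsin : Real.sin (2*(((N+1:ℕ)):ℝ)*Real.pi/(4*(N:ℝ)+5)) = Real.cos δ := by
    rw [hangle, Real.sin_pi_div_two_sub]
  have hsinle : Real.sin δ ≤ δ := Real.sin_le hδ0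
  have hsinn : 0 ≤ Real.sin δ := Real.sin_nonneg_of_nonneg_of_le_pi hδ0 hδπ
  have hss : Real.sin δ^2 ≤ δ^2 := by
    rw [pow_two, pow_two]; exact mul_self_le_mul_self hsinn hsinle
  have hcos2 : Real.cos δ ^ 2 = 1 - Real.sin δ ^ 2 := Real.cos_sq' δ
  have hδh : δ ≤ Real.pi * h/(8*L) := by
    have e0 : Real.pi * h/(8*L) = Real.pi/(8*((N:ℝ)+1)) := by
      rw [hhdef]; field_simp
    rw [e0, hδdef, div_le_div_iff₀ (by positivity) (by positivity)]
    nlinarith only [hπ]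
  have hCδ : 12*c^2*δ^2 ≤ (12*c^2*Real.pi^2/(64*L) + 1)*h := by
    have e1 : δ*δ ≤ (Real.pi*h/(8*L))*(Real.pi*h/(8*L)) := mul_self_le_mul_self hδ0 hδh
    have e2 : (Real.pi*h/(8*L))*(Real.pi*h/(8*L)) = Real.pi^2*(h*h)/(64*L^2) := by ring
    have e3 : h*h ≤ h*L := mul_le_mul_of_nonneg_left hhL hh0.le
    have e4 : δ^2 ≤ Real.pi^2*(h*L)/(64*L^2) := by
      rw [pow_two]
      refine (e1.trans_eq e2).trans ?_
      exact (div_le_div_iff_of_pos_right (by positivity)).mpr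
        (mul_le_mul_of_nonneg_left e3 (sq_nonneg Real.pi))
    have e5 : Real.pi^2*(h*L)/(64*L^2) = Real.pi^2*h/(64*L) := by
      field_simp
    calc 12*c^2*δ^2 ≤ 12*c^2*(Real.pi^2*h/(64*L)) := by
          rw [← e5]
          exact mul_le_mul_of_nonneg_left e4 (by positivity)
      _ = 12*c^2*Real.pi^2/(64*L)*h := by ring
      _ ≤ (12*c^2*Real.pi^2/(64*L) + 1)*h := by nlinarith only [hh0]
  have hc12 : (0:ℝ) ≤ 12*c^2 := by positivity
  refine ⟨N+1, by omega, ?_, ?_⟩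
  · rw [hsin, hcos2]
    have hmul : 12*c^2*(Real.sin δ^2) ≤ 12*c^2*(δ^2) := mul_le_mul_of_nonneg_left hss hc12
    nlinarith only [core, hCδ, hmul]
  · have hCh : 0 < (12*c^2*Real.pi^2/(64*L) + 1)*h := by positivity
    linarith only [core, hCh]
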